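/- Let K = ∏_{s∈S} k_s / D, F = K(t), A = K[t], and U(A) = ∏_{s∈S} k_s[t] / D. Then the set of elements of U(A) that are algebraic over F is exactly A; in particular, the set of elements of the ultra-hull U(F) = ∏_{s∈S} k_s(t)/D that are algebraic over F is exactly F. -/

import Mathlib

/-- `K` (with surjection `π` from the product) is the ultraproduct of the family `R`
with respect to the ultrafilter `D`. -/
def IsUltraproduct {S : Type*} {R : S → Type*} [∀ s, CommRing (R s)]
    {K : Type*} [CommRing K] (D : Ultrafilter S) (π : (∀ s, R s) →+* K) : Prop :=
  Function.Surjective π ∧ ∀ f g : ∀ s, R s, π f = π g ↔ {s | f s = g s} ∈ D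

/-- Factor out the largest power of X. -/
lemma UPaux.factor_out_X {F : Type*} [Field F] :
    ∀ (n : ℕ) (p : Polynomial F), p.natDegree ≤ n → p ≠ 0 →
      ∃ (m : ℕ) (q : Polynomial F), p = Polynomial.X ^ m * q ∧ q.coeff 0 ≠ 0 := by
  intro n
  induction n with
  | zero =>
    intro p hd hp
    refine ⟨0, p, by simp, fun h0 => hp ?_⟩
    rw [Polynomial.eq_C_of_natDegree_le_zero hd, h0, map_zero]
  | succ n ih =>
    intro p hd hp
    by_cases h0 : p.coeff 0 = 0
    · obtain ⟨q, rfl⟩ := Polynomial.X_dvd_iff.2 h0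
      have hq : q ≠ 0 := fun h => hp (by simp [h])
      have hdq : q.natDegree ≤ n := by
        have := Polynomial.natDegree_mul (p := Polynomial.X) (q := q) Polynomial.X_ne_zero hq
        rw [Polynomial.natDegree_X] at this
        omega
      obtain ⟨m, r, hr, hr0⟩ := ih q hdq hq
      exact ⟨m + 1, r, by rw [hr]; ring, hr0⟩
    · exact ⟨0, p, by simp, h0⟩

/-- Per-field divisibility bound: if `f` satisfies a polynomial relation with
polynomial coefficients, its numerator divides the constant coefficient and its
denominator divides the top coefficient. -/
lemma UPaux.num_denom_dvd {k : Type*} [Field k] (n : ℕ) (P : ℕ → Polynomial k) (f : RatFunc k)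
    (h0 : P 0 ≠ 0) (hn : P n ≠ 0)
    (hrel : ∑ i ∈ Finset.range (n + 1),
      algebraMap (Polynomial k) (RatFunc k) (P i) * f ^ i = 0) :
    f.num ∣ P 0 ∧ f.denom ∣ P n := by
  set u := f.num with hu
  set v := f.denom with hv
  have hvne : v ≠ 0 := f.denom_ne_zero
  have hvA : algebraMap (Polynomial k) (RatFunc k) v ≠ 0 := fun h =>
    hvne (RatFunc.algebraMap_injective k (by rw [h, map_zero]))
  have hf : f = algebraMap (Polynomial k) (RatFunc k) u / algebraMap (Polynomial k) (RatFunc k) v :=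
    (RatFunc.num_div_denom f).symm
  have key : ∑ i ∈ Finset.range (n + 1), P i * u ^ i * v ^ (n - i) = 0 := by
    apply RatFunc.algebraMap_injective k
    rw [map_sum, map_zero]
    have h2 : (∑ i ∈ Finset.range (n + 1),
        algebraMap (Polynomial k) (RatFunc k) (P i) * f ^ i) *
        algebraMap (Polynomial k) (RatFunc k) v ^ n = 0 := by rw [hrel, zero_mul]
    rw [← h2, Finset.sum_mul]
    refine Finset.sum_congr rfl fun i hi => ?_
    have hin : i ≤ n := Nat.lt_succ_iff.mp (Finset.mem_range.mp hi)
    rw [map_mul, map_mul, map_pow, map_pow, hf, div_pow, eq_comm, ← mul_div_assoc,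
      div_mul_eq_mul_div, div_eq_iff (pow_ne_zero _ hvA)]
    conv_rhs => rw [mul_assoc, pow_sub_mul_pow _ hin]
  have hcop : IsCoprime u v := RatFunc.isCoprime_num_denom f
  constructor
  · have hkey' := key
    rw [Finset.sum_range_succ'] at hkey'
    have h1 : P 0 * v ^ n = -∑ i ∈ Finset.range n, P (i + 1) * u ^ (i + 1) * v ^ (n - (i + 1)) := by
      rw [eq_neg_iff_add_eq_zero, add_comm]
      simpa using hkey'
    have hdvd : u ∣ P 0 * v ^ n := by
      rw [h1, dvd_neg]
      exact Finset.dvd_sum fun i _ =>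
        (dvd_pow_self u (Nat.succ_ne_zero i)).mul_left _ |>.mul_right _
    exact (hcop.pow_right (n := n)).dvd_of_dvd_mul_right hdvd
  · have hkey' := key
    rw [Finset.sum_range_succ] at hkey'
    have h1 : P n * u ^ n = -∑ i ∈ Finset.range n, P i * u ^ i * v ^ (n - i) := by
      rw [eq_neg_iff_add_eq_zero, add_comm]
      simpa using hkey'
    have hdvd : v ∣ P n * u ^ n := by
      rw [h1, dvd_neg]
      refine Finset.dvd_sum fun i hi => ?_
      have hni : n - i ≠ 0 := by have := Finset.mem_range.mp hi; omega
      exact (dvd_pow_self v hni).mul_left _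
    exact (hcop.symm.pow_right (n := n)).dvd_of_dvd_mul_right hdvd

namespace UPaux

variable {S : Type*} {D : Ultrafilter S} {k : S → Type*} [∀ s, Field (k s)]
  {K : Type*} [Field K] {πK : (∀ s, k s) →+* K}
  {UF : Type*} [Field UF] [Algebra (RatFunc K) UF]
  {πF : (∀ s, RatFunc (k s)) →+* UF}

/-- A polynomial of bounded degree as a sum of `C c * X^j` in the rational function field. -/
lemma ratfunc_sum {F : Type*} [Field F] (p : Polynomial F) (N : ℕ) (h : p.natDegree < N) :
    algebraMap (Polynomial F) (RatFunc F) p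
      = ∑ j ∈ Finset.range N, RatFunc.C (p.coeff j) * RatFunc.X ^ j := by
  conv_lhs => rw [Polynomial.as_sum_range' p N h]
  rw [map_sum]
  refine Finset.sum_congr rfl fun j _ => ?_
  rw [← Polynomial.C_mul_X_pow_eq_monomial, map_mul, map_pow, RatFunc.algebraMap_C,
    RatFunc.algebraMap_X]

lemma core
    (hC : ∀ f : ∀ s, k s,
      algebraMap (RatFunc K) UF (RatFunc.C (πK f)) = πF fun s => RatFunc.C (f s))
    (hX : algebraMap (RatFunc K) UF RatFunc.X = πF fun s => RatFunc.X)
    (a : ℕ → ∀ s, k s) (N : ℕ) :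
    algebraMap (RatFunc K) UF (∑ j ∈ Finset.range N, RatFunc.C (πK (a j)) * RatFunc.X ^ j)
      = πF fun s => ∑ j ∈ Finset.range N, RatFunc.C (a j s) * RatFunc.X ^ j := by
  have h : (fun s => ∑ j ∈ Finset.range N, RatFunc.C (a j s) * RatFunc.X ^ j)
      = ∑ j ∈ Finset.range N,
          (fun s => RatFunc.C (a j s)) * (fun _ => RatFunc.X) ^ j := by
    funext s
    simp [Finset.sum_apply]
  rw [h, map_sum, map_sum]
  refine Finset.sum_congr rfl fun j _ => ?_
  rw [map_mul, map_pow, hC (a j), hX, map_mul, map_pow]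

/-- Transfer a `D`-a.e. degree-bounded family of polynomials to a polynomial over `K`. -/
lemma toK (hUF : IsUltraproduct D πF)
    (hC : ∀ f : ∀ s, k s,
      algebraMap (RatFunc K) UF (RatFunc.C (πK f)) = πF fun s => RatFunc.C (f s))
    (hX : algebraMap (RatFunc K) UF RatFunc.X = πF fun s => RatFunc.X)
    (p : ∀ s, Polynomial (k s)) (N : ℕ) (hbd : {s | (p s).natDegree ≤ N} ∈ D) :
    ∃ Q : Polynomial K,
      algebraMap (RatFunc K) UF (algebraMap (Polynomial K) (RatFunc K) Q)
        = πF (fun s => algebraMap (Polynomial (k s)) (RatFunc (k s)) (p s)) ∧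
      ({s | p s ≠ 0} ∈ D → Q ≠ 0) := by
  set a : ℕ → ∀ s, k s := fun j s => (p s).coeff j with ha
  set Q : Polynomial K :=
    ∑ j ∈ Finset.range (N + 1), Polynomial.C (πK (a j)) * Polynomial.X ^ j with hQ
  have h1 : algebraMap (Polynomial K) (RatFunc K) Q
      = ∑ j ∈ Finset.range (N + 1), RatFunc.C (πK (a j)) * RatFunc.X ^ j := by
    rw [hQ, map_sum]
    refine Finset.sum_congr rfl fun j _ => ?_
    rw [map_mul, map_pow, RatFunc.algebraMap_C, RatFunc.algebraMap_X]
  have heq : algebraMap (RatFunc K) UF (algebraMap (Polynomial K) (RatFunc K) Q)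
      = πF (fun s => algebraMap (Polynomial (k s)) (RatFunc (k s)) (p s)) := by
    rw [h1, core hC hX]
    refine (hUF.2 _ _).2 ?_
    refine Filter.mem_of_superset hbd fun s hs => ?_
    exact (ratfunc_sum (p s) (N + 1) (Nat.lt_succ_of_le hs)).symm
  refine ⟨Q, heq, fun hne hQ0 => ?_⟩
  have h0 : πF (fun s => algebraMap (Polynomial (k s)) (RatFunc (k s)) (p s)) = πF 0 := by
    rw [← heq, hQ0, map_zero, map_zero, map_zero]
  have hmem : {s | algebraMap (Polynomial (k s)) (RatFunc (k s)) (p s) = 0} ∈ D := by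
    simpa using (hUF.2 _ _).1 h0
  obtain ⟨s, hs1, hs2⟩ := Filter.nonempty_of_mem (Filter.inter_mem hmem hne)
  exact hs2 (RatFunc.algebraMap_injective (k s) (by simpa using hs1))

/-- Lift a polynomial over `K` to a degree-bounded family. -/
lemma toFam (hK : IsUltraproduct D πK)
    (hC : ∀ f : ∀ s, k s,
      algebraMap (RatFunc K) UF (RatFunc.C (πK f)) = πF fun s => RatFunc.C (f s))
    (hX : algebraMap (RatFunc K) UF RatFunc.X = πF fun s => RatFunc.X)
    (Q : Polynomial K) :
    ∃ P : ∀ s, Polynomial (k s), (∀ s, (P s).natDegree ≤ Q.natDegree) ∧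
      algebraMap (RatFunc K) UF (algebraMap (Polynomial K) (RatFunc K) Q)
        = πF (fun s => algebraMap (Polynomial (k s)) (RatFunc (k s)) (P s)) := by
  choose a ha using fun j => hK.1 (Q.coeff j)
  set d := Q.natDegree with hd
  refine ⟨fun s => ∑ j ∈ Finset.range (d + 1), Polynomial.C (a j s) * Polynomial.X ^ j,
    fun s => ?_, ?_⟩
  · refine Polynomial.natDegree_sum_le_of_forall_le _ _ fun j hj => ?_
    exact le_trans (Polynomial.natDegree_C_mul_X_pow_le _ _)
      (Nat.lt_succ_iff.mp (Finset.mem_range.mp hj))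
  · rw [ratfunc_sum Q (d + 1) (Nat.lt_succ_self _)]
    have h2 : ∑ j ∈ Finset.range (d + 1), RatFunc.C (Q.coeff j) * RatFunc.X ^ j
        = ∑ j ∈ Finset.range (d + 1), RatFunc.C (πK (a j)) * RatFunc.X ^ j := by
      refine Finset.sum_congr rfl fun j _ => ?_
      rw [ha j]
    rw [h2, core hC hX]
    congr 1
    funext s
    have hdeg : (∑ j ∈ Finset.range (d + 1),
        Polynomial.C (a j s) * Polynomial.X ^ j).natDegree < d + 1 := by
      refine Nat.lt_succ_of_le (Polynomial.natDegree_sum_le_of_forall_le _ _ fun j hj => ?_)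
      exact le_trans (Polynomial.natDegree_C_mul_X_pow_le _ _)
        (Nat.lt_succ_iff.mp (Finset.mem_range.mp hj))
    rw [ratfunc_sum _ (d + 1) hdeg]
    refine Finset.sum_congr rfl fun j hj => ?_
    congr 1
    rw [Polynomial.finset_sum_coeff]
    rw [Finset.sum_eq_single j]
    · simp
    · intro b _ hbj
      rw [Polynomial.coeff_C_mul, Polynomial.coeff_X_pow, if_neg fun h => hbj h.symm, mul_zero]
    · intro hj'
      exact absurd hj hj'

/-- From algebraicity, a uniform a.e. bound on numerator and denominator degrees. -/
lemma alg_bound (hK : IsUltraproduct D πK) (hUF : IsUltraproduct D πF)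
    (hC : ∀ f : ∀ s, k s,
      algebraMap (RatFunc K) UF (RatFunc.C (πK f)) = πF fun s => RatFunc.C (f s))
    (hX : algebraMap (RatFunc K) UF RatFunc.X = πF fun s => RatFunc.X)
    (f : ∀ s, RatFunc (k s)) (x : UF) (hx : x = πF f) (hal : IsAlgebraic (RatFunc K) x) :
    ∃ N, {s | (f s).num.natDegree ≤ N ∧ (f s).denom.natDegree ≤ N} ∈ D := by
  by_cases hx0 : x = 0
  · refine ⟨0, ?_⟩
    have h0 : {s | f s = 0} ∈ D := by
      have := (hUF.2 f 0).1 (by rw [← hx, hx0, map_zero])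
      simpa using this
    refine Filter.mem_of_superset h0 fun s hs => ?_
    simp only [Set.mem_setOf_eq] at hs ⊢
    rw [hs]
    simp
  · obtain ⟨p, hp0, hpx⟩ := hal
    obtain ⟨m, q, hpq, hq0⟩ := UPaux.factor_out_X p.natDegree p le_rfl hp0
    have hq : Polynomial.aeval x q = 0 := by
      rw [hpq, map_mul, map_pow, Polynomial.aeval_X] at hpx
      rcases mul_eq_zero.mp hpx with h | h
      · exact absurd h (pow_ne_zero _ hx0)
      · exact h
    have hqne : q ≠ 0 := fun h => hq0 (by simp [h])
    set n := q.natDegree with hn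
    have hqlead : q.coeff n ≠ 0 := Polynomial.leadingCoeff_ne_zero.mpr hqne
    set Q := IsLocalization.integerNormalization (nonZeroDivisors (Polynomial K)) q with hQdef
    obtain ⟨b, hb⟩ := IsLocalization.integerNormalization_spec (nonZeroDivisors (Polynomial K)) q
    have hbne : algebraMap (Polynomial K) (RatFunc K) (b : Polynomial K) ≠ 0 := fun h =>
      (mem_nonZeroDivisors_iff_ne_zero.mp hb.1)
        (RatFunc.algebraMap_injective K (by rw [h, map_zero]))
    have hcoeff : ∀ i, Q.coeff i = 0 ↔ q.coeff i = 0 := by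
      intro i
      constructor
      · intro h
        have h2 : algebraMap (Polynomial K) (RatFunc K) (Q.coeff i) = b • q.coeff i := by
          simpa only [Polynomial.coeff_map, Polynomial.coeff_smul] using Polynomial.ext_iff.mp hb.2 i
        rw [h, map_zero, Algebra.smul_def] at h2
        exact (mul_eq_zero.mp h2.symm).resolve_left hbne
      · intro h
        have h2 : algebraMap (Polynomial K) (RatFunc K) (Q.coeff i) = b • q.coeff i := by
          simpa only [Polynomial.coeff_map, Polynomial.coeff_smul] using Polynomial.ext_iff.mp hb.2 i
        rw [h, smul_zero] at h2
        exact RatFunc.algebraMap_injective K (by rw [h2, map_zero])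
    have hQ0 : Q.coeff 0 ≠ 0 := fun h => hq0 ((hcoeff 0).mp h)
    have hQn : Q.coeff n ≠ 0 := fun h => hqlead ((hcoeff n).mp h)
    have hQdeg : Q.natDegree ≤ n := Polynomial.natDegree_le_iff_coeff_eq_zero.2 fun N hN =>
      (hcoeff N).mpr (Polynomial.coeff_eq_zero_of_natDegree_lt (hn ▸ hN))
    have heval : Polynomial.eval₂
        ((algebraMap (RatFunc K) UF).comp (algebraMap (Polynomial K) (RatFunc K))) x Q = 0 :=
      IsLocalization.integerNormalization_eval₂_eq_zero _ _ _
        (by rwa [Polynomial.aeval_def] at hq)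
    choose P hPdeg hPeq using fun i => toFam hK hC hX (Q.coeff i)
    have hsum : πF (fun s => ∑ i ∈ Finset.range (n + 1),
        algebraMap (Polynomial (k s)) (RatFunc (k s)) (P i s) * f s ^ i) = 0 := by
      have hfun : (fun s => ∑ i ∈ Finset.range (n + 1),
          algebraMap (Polynomial (k s)) (RatFunc (k s)) (P i s) * f s ^ i)
          = ∑ i ∈ Finset.range (n + 1),
              (fun s => algebraMap (Polynomial (k s)) (RatFunc (k s)) (P i s)) * f ^ i := by
        funext s
        simp [Finset.sum_apply]
      rw [hfun, map_sum]
      have hterm : ∀ i ∈ Finset.range (n + 1),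
          πF ((fun s => algebraMap (Polynomial (k s)) (RatFunc (k s)) (P i s)) * f ^ i)
          = ((algebraMap (RatFunc K) UF).comp (algebraMap (Polynomial K) (RatFunc K)))
              (Q.coeff i) * x ^ i := by
        intro i _
        rw [map_mul, map_pow, ← hPeq i, hx]
        rfl
      rw [Finset.sum_congr rfl hterm,
        ← Polynomial.eval₂_eq_sum_range' _ (Nat.lt_succ_of_le hQdeg) x, heval]
    have E1 : {s | ∑ i ∈ Finset.range (n + 1),
        algebraMap (Polynomial (k s)) (RatFunc (k s)) (P i s) * f s ^ i = 0} ∈ D := by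
      have h9 := (hUF.2 (fun s => ∑ i ∈ Finset.range (n + 1),
        algebraMap (Polynomial (k s)) (RatFunc (k s)) (P i s) * f s ^ i) 0).1
        (by rw [map_zero]; exact hsum)
      simpa using h9
    have Ene : ∀ i, Q.coeff i ≠ 0 → {s | P i s ≠ 0} ∈ D := by
      intro i hi
      have hne : πF (fun s => algebraMap (Polynomial (k s)) (RatFunc (k s)) (P i s)) ≠ 0 := by
        rw [← hPeq i]
        intro h
        have h2 : algebraMap (Polynomial K) (RatFunc K) (Q.coeff i) = 0 :=
          (algebraMap (RatFunc K) UF).injective (by rw [h, map_zero])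
        exact hi (RatFunc.algebraMap_injective K (by rw [h2, map_zero]))
      have hnm : {s | algebraMap (Polynomial (k s)) (RatFunc (k s)) (P i s) = 0} ∉ D := by
        intro hmem
        refine hne ?_
        have := (hUF.2 (fun s => algebraMap (Polynomial (k s)) (RatFunc (k s)) (P i s)) 0).2
          (by simpa using hmem)
        rw [this, map_zero]
      have hcm := Ultrafilter.compl_mem_iff_notMem.mpr hnm
      refine Filter.mem_of_superset hcm fun s hs => ?_
      intro h
      exact hs (by simp [h])
    have E2 := Ene n hQn
    have E3 := Ene 0 hQ0
    refine ⟨max (Q.coeff 0).natDegree (Q.coeff n).natDegree, ?_⟩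
    have hE := Filter.inter_mem (Filter.inter_mem E1 E2) E3
    refine Filter.mem_of_superset hE fun s hs => ?_
    obtain ⟨⟨h1, h2⟩, h3⟩ := hs
    obtain ⟨hdvd0, hdvdn⟩ := UPaux.num_denom_dvd n (fun i => P i s) (f s) h3 h2 h1
    constructor
    · exact le_trans (Polynomial.natDegree_le_of_dvd hdvd0 h3)
        (le_trans (hPdeg 0 s) (le_max_left _ _))
    · exact le_trans (Polynomial.natDegree_le_of_dvd hdvdn h2)
        (le_trans (hPdeg n s) (le_max_right _ _))

/-- A family with a.e. bounded numerator/denominator degrees lands in the image of `RatFunc K`. -/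
lemma bdd (hUF : IsUltraproduct D πF)
    (hC : ∀ f : ∀ s, k s,
      algebraMap (RatFunc K) UF (RatFunc.C (πK f)) = πF fun s => RatFunc.C (f s))
    (hX : algebraMap (RatFunc K) UF RatFunc.X = πF fun s => RatFunc.X)
    (f : ∀ s, RatFunc (k s)) (x : UF) (hx : x = πF f) (N : ℕ)
    (h : {s | (f s).num.natDegree ≤ N ∧ (f s).denom.natDegree ≤ N} ∈ D) :
    x ∈ Set.range (algebraMap (RatFunc K) UF) := by
  obtain ⟨U, hU, -⟩ := toK hUF hC hX (fun s => (f s).num) N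
    (Filter.mem_of_superset h fun s hs => hs.1)
  obtain ⟨V, hV, hVne⟩ := toK hUF hC hX (fun s => (f s).denom) N
    (Filter.mem_of_superset h fun s hs => hs.2)
  have hVne' : V ≠ 0 := hVne (Filter.univ_mem' fun s => RatFunc.denom_ne_zero (f s))
  have hden : πF (fun s => algebraMap (Polynomial (k s)) (RatFunc (k s)) (f s).denom) ≠ 0 := by
    rw [← hV]
    intro h0
    have h2 : algebraMap (Polynomial K) (RatFunc K) V = 0 :=
      (algebraMap (RatFunc K) UF).injective (by rw [h0, map_zero])
    exact hVne' (RatFunc.algebraMap_injective K (by rw [h2, map_zero]))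
  refine ⟨algebraMap (Polynomial K) (RatFunc K) U / algebraMap (Polynomial K) (RatFunc K) V, ?_⟩
  rw [map_div₀, hU, hV, div_eq_iff hden, hx, ← map_mul]
  refine (hUF.2 _ _).2 (Filter.univ_mem' fun s => ?_)
  show algebraMap (Polynomial (k s)) (RatFunc (k s)) (f s).num
    = f s * algebraMap (Polynomial (k s)) (RatFunc (k s)) (f s).denom
  refine Eq.symm ?_
  have hd : algebraMap (Polynomial (k s)) (RatFunc (k s)) (f s).denom ≠ 0 := fun h0 =>
    (f s).denom_ne_zero (RatFunc.algebraMap_injective (k s) (by rw [h0, map_zero]))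
  calc f s * algebraMap (Polynomial (k s)) (RatFunc (k s)) (f s).denom
      = algebraMap (Polynomial (k s)) (RatFunc (k s)) (f s).num /
          algebraMap (Polynomial (k s)) (RatFunc (k s)) (f s).denom *
          algebraMap (Polynomial (k s)) (RatFunc (k s)) (f s).denom := by
        rw [RatFunc.num_div_denom]
    _ = algebraMap (Polynomial (k s)) (RatFunc (k s)) (f s).num := div_mul_cancel₀ _ hd

end UPaux

/-- The elements of the ultra-hull `U(A) = ∏ k_s[t]/D` that are algebraic over
`F = K(t)` are exactly (the image of) `A = K[t]`; likewise the elements of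
`U(F) = ∏ k_s(t)/D` algebraic over `F` are exactly (the image of) `F`. -/
theorem stmt_11 {S : Type*} [Infinite S] (D : Ultrafilter S) (hD : ∀ s : S, D ≠ pure s)
    (k : S → Type*) [∀ s, Field (k s)] (K : Type*) [Field K]
    (πK : (∀ s, k s) →+* K) (hK : IsUltraproduct D πK)
    (UF : Type*) [Field UF] [Algebra (RatFunc K) UF]
    (πF : (∀ s, RatFunc (k s)) →+* UF) (hUF : IsUltraproduct D πF)
    (hC : ∀ f : ∀ s, k s,
      algebraMap (RatFunc K) UF (RatFunc.C (πK f)) = πF fun s => RatFunc.C (f s))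
    (hX : algebraMap (RatFunc K) UF RatFunc.X = πF fun s => RatFunc.X) :
    ({x : UF | (∃ P : ∀ s, Polynomial (k s),
        x = πF fun s => algebraMap (Polynomial (k s)) (RatFunc (k s)) (P s)) ∧
        IsAlgebraic (RatFunc K) x}
      = {x : UF | ∃ Q : Polynomial K,
          x = algebraMap (RatFunc K) UF (algebraMap (Polynomial K) (RatFunc K) Q)}) ∧
    ({x : UF | IsAlgebraic (RatFunc K) x} = Set.range (algebraMap (RatFunc K) UF)) := by
  constructor
  · ext x
    simp only [Set.mem_setOf_eq]
    constructor
    · rintro ⟨⟨P, hP⟩, hal⟩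
      obtain ⟨N, hN⟩ := UPaux.alg_bound hK hUF hC hX
        (fun s => algebraMap (Polynomial (k s)) (RatFunc (k s)) (P s)) x hP hal
      have hbd : {s | (P s).natDegree ≤ N} ∈ D := by
        refine Filter.mem_of_superset hN fun s hs => ?_
        have := hs.1
        rwa [RatFunc.num_algebraMap] at this
      obtain ⟨Q, hQ, -⟩ := UPaux.toK hUF hC hX P N hbd
      exact ⟨Q, by rw [hP, ← hQ]⟩
    · rintro ⟨Q, rfl⟩
      obtain ⟨P, -, hPeq⟩ := UPaux.toFam hK hC hX Q
      exact ⟨⟨P, hPeq⟩, isAlgebraic_algebraMap _⟩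
  · ext x
    simp only [Set.mem_setOf_eq]
    constructor
    · intro hal
      obtain ⟨f, hf⟩ := hUF.1 x
      obtain ⟨N, hN⟩ := UPaux.alg_bound hK hUF hC hX f x hf.symm hal
      exact UPaux.bdd hUF hC hX f x hf.symm N hN
    · rintro ⟨r, rfl⟩
      exact isAlgebraic_algebraMap r
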